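/- Assume the Setup and suppose the neighborhood relation is symmetric: j ∈ N_i if and only if i ∈ N_j. Suppose for each i ∈ V there exist: a symmetric Φ_i ∈ ℝ^{n_{d,i}×n_{d,i}}, a symmetric positive definite E_i ∈ ℝ^{n_i×n_i}, a symmetric P̄_i ∈ ℝ^{(n_i+q_i)×(n_i+q_i)}, γ_i > 0, symmetric F_i, S_i ∈ ℝ^{n_{N_i}×n_{N_i}}, Y_i ∈ ℝ^{m_i×n_{N_i}}, and matrices A'_i ∈ ℝ^{n_i×n_{N_i}}, B'_i ∈ ℝ^{n_i×m_i}, B_{d,i} ∈ ℝ^{n_i×n_{d,i}}, C_{z,i} ∈ ℝ^{q_i×n_{N_i}}, D_{z,i} ∈ ℝ^{q_i×m_i}, C_{y,i} ∈ ℝ^{p_i×n_{N_i}}, D_{y,i} ∈ ℝ^{p_i×m_i}, such that, with E := Σ_{j∈V} T_jᵀ E_j T_j, E_{N_i} := W_i E W_iᵀ, Ē_i := W_i T_iᵀ E_i T_i W_iᵀ, J_i := the (n_i+q_i)×n_{N_i} matrix stacking A'_i E_{N_i} + B'_i Y_i on top of C_{z,i} E_{N_i} + D_{z,i} Y_i,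 and H_i := C_{y,i} E_{N_i} + D_{y,i} Y_i: (a) trace(Φ_i) < γ_i²; (b) the block matrix [[Φ_i, B_{d,i}ᵀ],[B_{d,i}, E_i]] ≻ 0; (c) the 3×3 block matrix [[P̄_i + blkdiag(−E_i, 0_{q_i}), J_i, 0],[J_iᵀ, −Ē_i − F_i, H_iᵀ],[0, H_i, −I_{p_i}]] ≺ 0; (d) F_i ⪯ S_i and S_i = Σ_{j∈N_i} (W_i T_jᵀ) S_j^{(i)} (T_j W_iᵀ) for some symmetric matrices S_j^{(i)} ∈ ℝ^{n_j×n_j}; (e) Σ_{j∈N_i} T_i W_jᵀ S_j W_j T_iᵀ ⪯ 0. Then, with P_i := E_i⁻¹, K_i := Y_i E_{N_i}⁻¹, Θ_i := E_{N_i}⁻¹ F_i E_{N_i}⁻¹, for every matrix Δ̃_i ∈ ℝ^{n_i×q_i} satisfying [I_{n_i}, Δ̃_i] P̄_i [I_{n_i}, Δ̃_i]ᵀ ⪰ 0, the following hold for every i ∈ V: (i) with Â_i := A'_i + B'_i K_i + Δ̃_i (C_{z,i} + D_{z,i} K_i) and C̃_i := C_{y,i} + D_{y,i} K_i, the inequality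 Â_iᵀ P_i Â_i − W_i T_iᵀ P_i T_i W_iᵀ + C̃_iᵀ C̃_i ≺ Θ_i holds; (ii) trace(B_{d,i}ᵀ P_i B_{d,i}) < γ_i²; and (iii) Σ_{i∈V} W_iᵀ Θ_i W_i ⪯ 0. -/

import Mathlib

open Matrix

section helpers
variable {l m : Type*} [Fintype l] [Fintype m] [DecidableEq l] [DecidableEq m]

omit [Fintype l] [Fintype m] [DecidableEq l] [DecidableEq m] in
private lemma treq {M : Matrix m m ℝ} (h : M.IsHermitian) : Mᵀ = M := by
  rw [← conjTranspose_eq_transpose_of_trivial]; exact h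

private lemma psd_conj {M : Matrix m m ℝ} (hM : M.PosSemidef) (A : Matrix l m ℝ) :
    (A * M * Aᵀ).PosSemidef := by
  have := hM.mul_mul_conjTranspose_same A
  rwa [conjTranspose_eq_transpose_of_trivial] at this

private lemma pd_conj {M : Matrix m m ℝ} (hM : M.PosDef) (A : Matrix l m ℝ)
    (L : Matrix l m ℝ) (hL : L * Aᵀ = 1) : (A * M * Aᵀ).PosDef := by
  refine Matrix.PosDef.of_dotProduct_mulVec_pos ?_ ?_
  · rw [Matrix.IsHermitian, conjTranspose_eq_transpose_of_trivial]
    rw [Matrix.transpose_mul, Matrix.transpose_mul, Matrix.transpose_transpose,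
      treq hM.1, Matrix.mul_assoc]
  · intro x hx
    have hy : Aᵀ *ᵥ x ≠ 0 := by
      intro h0
      apply hx
      have h1 : (L * Aᵀ) *ᵥ x = L *ᵥ (Aᵀ *ᵥ x) := by rw [Matrix.mulVec_mulVec]
      rw [hL, h0, Matrix.mulVec_zero, Matrix.one_mulVec] at h1
      exact h1
    have hpos := hM.dotProduct_mulVec_pos hy
    have heq : star x ⬝ᵥ (A * M * Aᵀ) *ᵥ x = star (Aᵀ *ᵥ x) ⬝ᵥ M *ᵥ (Aᵀ *ᵥ x) := by
      rw [star_trivial, star_trivial, ← Matrix.mulVec_mulVec, ← Matrix.mulVec_mulVec,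
        Matrix.dotProduct_mulVec, ← Matrix.mulVec_transpose]
    rw [heq]
    exact hpos

end helpers

section schur
set_option linter.unusedSectionVars false
variable {l m : Type*} [Fintype l] [Fintype m] [DecidableEq l] [DecidableEq m]

private lemma pdIsUnitDet {A : Matrix m m ℝ} (hA : A.PosDef) : IsUnit A.det :=
  isUnit_iff_ne_zero.2 hA.det_pos.ne'

private lemma pdInvT {A : Matrix m m ℝ} (hA : A.PosDef) : (A⁻¹)ᵀ = A⁻¹ := by
  rw [Matrix.transpose_nonsing_inv, treq hA.1]

private lemma schur_tl {A : Matrix m m ℝ} {B : Matrix m l ℝ} {D : Matrix l l ℝ}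
    (hA : A.PosDef) (h : (fromBlocks A B Bᵀ D).PosDef) :
    (D - Bᵀ * A⁻¹ * B).PosDef := by
  have hane : A * A⁻¹ = 1 := Matrix.mul_nonsing_inv A (pdIsUnitDet hA)
  set G := fromCols (-(Bᵀ * A⁻¹)) (1 : Matrix l l ℝ) with hG
  have hGT : Gᵀ = fromRows (-(A⁻¹ * B)) 1 := by
    rw [hG, transpose_fromCols, Matrix.transpose_neg, Matrix.transpose_mul,
      pdInvT hA, Matrix.transpose_one, Matrix.transpose_transpose]
  have key : G * (fromBlocks A B Bᵀ D) * Gᵀ = D - Bᵀ * A⁻¹ * B := by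
    rw [hGT, Matrix.mul_assoc, fromBlocks_mul_fromRows, hG, fromCols_mul_fromRows]
    simp only [Matrix.mul_neg, Matrix.neg_mul, ← Matrix.mul_assoc, hane, Matrix.one_mul,
      Matrix.mul_one, neg_add_cancel, add_neg_cancel, Matrix.mul_zero, Matrix.zero_mul, neg_zero, zero_add,
      add_zero]
    abel
  have hL : (fromCols 0 1 : Matrix l (m ⊕ l) ℝ) * Gᵀ = 1 := by
    rw [hGT, fromCols_mul_fromRows]; simp
  have := pd_conj h G (fromCols 0 1) hL
  rwa [key] at this

private lemma schur_br {A : Matrix l l ℝ} {B : Matrix l m ℝ} {D : Matrix m m ℝ}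
    (hD : D.PosDef) (h : (fromBlocks A B Bᵀ D).PosDef) :
    (A - B * D⁻¹ * Bᵀ).PosDef := by
  have hane : D * D⁻¹ = 1 := Matrix.mul_nonsing_inv D (pdIsUnitDet hD)
  set G := fromCols (1 : Matrix l l ℝ) (-(B * D⁻¹)) with hG
  have hGT : Gᵀ = fromRows 1 (-(D⁻¹ * Bᵀ)) := by
    rw [hG, transpose_fromCols, Matrix.transpose_neg, Matrix.transpose_mul,
      pdInvT hD, Matrix.transpose_one]
  have key : G * (fromBlocks A B Bᵀ D) * Gᵀ = A - B * D⁻¹ * Bᵀ := by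
    rw [hGT, Matrix.mul_assoc, fromBlocks_mul_fromRows, hG, fromCols_mul_fromRows]
    simp only [Matrix.mul_neg, Matrix.neg_mul, ← Matrix.mul_assoc, hane, Matrix.one_mul,
      Matrix.mul_one, neg_add_cancel, add_neg_cancel, Matrix.mul_zero, Matrix.zero_mul, neg_zero, zero_add,
      add_zero]
    abel
  have hL : (fromCols 1 0 : Matrix l (l ⊕ m) ℝ) * Gᵀ = 1 := by
    rw [hGT, fromCols_mul_fromRows]; simp
  have := pd_conj h G (fromCols 1 0) hL
  rwa [key] at this

private lemma psd_trace {M : Matrix m m ℝ} (hM : M.PosSemidef) : 0 ≤ M.trace := by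
  rw [Matrix.trace]
  apply Finset.sum_nonneg
  intro i _
  have := hM.dotProduct_mulVec_nonneg (Pi.single i 1)
  simpa [Matrix.mulVec, dotProduct, Pi.single_apply] using this

private lemma psd_sum {ι : Type*} {s : Finset ι} (f : ι → Matrix m m ℝ)
    (h : ∀ i ∈ s, (f i).PosSemidef) : (∑ i ∈ s, f i).PosSemidef := by
  refine Finset.sum_induction f _ (fun a b ha hb => ha.add hb) ?_ h
  exact ⟨by simp [Matrix.IsHermitian], fun x => by simp⟩

end schur

section more
set_option linter.unusedSectionVars false
variable {ι l m : Type*} [Fintype l] [Fintype m] [DecidableEq l] [DecidableEq m]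

private lemma sum_mulVec {s : Finset ι} (f : ι → Matrix m m ℝ) (x : m → ℝ) :
    (∑ i ∈ s, f i) *ᵥ x = ∑ i ∈ s, f i *ᵥ x := by
  induction s using Finset.cons_induction with
  | empty => simp
  | cons a s ha ih => simp [Finset.sum_cons, Matrix.add_mulVec, ih]

private lemma dp_sum {s : Finset ι} (x : m → ℝ) (f : ι → (m → ℝ)) :
    x ⬝ᵥ (∑ i ∈ s, f i) = ∑ i ∈ s, x ⬝ᵥ f i := by
  induction s using Finset.cons_induction with
  | empty => simp
  | cons a s ha ih => simp [Finset.sum_cons, dotProduct_add, ih]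

private lemma quad_conj (A : Matrix m l ℝ) (M : Matrix m m ℝ) (x : l → ℝ) :
    x ⬝ᵥ ((Aᵀ * M * A) *ᵥ x) = (A *ᵥ x) ⬝ᵥ (M *ᵥ (A *ᵥ x)) := by
  rw [← Matrix.mulVec_mulVec, ← Matrix.mulVec_mulVec, Matrix.dotProduct_mulVec,
    Matrix.vecMul_transpose]

private lemma psd_corner {P : Matrix m m ℝ} (hP : P.PosSemidef) :
    (fromBlocks P 0 0 (0 : Matrix l l ℝ)).PosSemidef := by
  have h := psd_conj hP (fromRows (1 : Matrix m m ℝ) (0 : Matrix l m ℝ))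
  rw [fromRows_mul, transpose_fromRows, Matrix.transpose_one, Matrix.transpose_zero,
    fromRows_mul_fromCols] at h
  simpa using h

end more

set_option maxHeartbeats 1600000 in
/-- Theorem 1: feasibility of the distributed gray-box synthesis LMIs implies the
decomposed H₂-design conditions robustly for all admissible uncertainties. -/
theorem stmt3
    {ι : Type} [Fintype ι] [DecidableEq ι]
    (n : ℕ) (ni nN : ι → ℕ) (N : ι → Finset ι)
    (T : ∀ i : ι, Matrix (Fin (ni i)) (Fin n) ℝ)
    (W : ∀ i : ι, Matrix (Fin (nN i)) (Fin n) ℝ)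
    (hNself : ∀ i : ι, i ∈ N i)
    (hn : n = ∑ i : ι, ni i)
    (hnN : ∀ i : ι, nN i = ∑ j ∈ N i, ni j)
    (hTT : ∀ i : ι, T i * (T i)ᵀ = 1)
    (hTTzero : ∀ i j : ι, i ≠ j → T i * (T j)ᵀ = 0)
    (hTsum : ∑ i : ι, (T i)ᵀ * T i = 1)
    (hWW : ∀ i : ι, W i * (W i)ᵀ = 1)
    (hWTW : ∀ i : ι, (W i)ᵀ * W i = ∑ j ∈ N i, (T j)ᵀ * T j)
    (hNsym : ∀ i j : ι, j ∈ N i ↔ i ∈ N j)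
    (q m p nd : ι → ℕ)
    (Φ : ∀ i : ι, Matrix (Fin (nd i)) (Fin (nd i)) ℝ) (hΦ : ∀ i : ι, (Φ i).IsSymm)
    (E : ∀ i : ι, Matrix (Fin (ni i)) (Fin (ni i)) ℝ) (hE : ∀ i : ι, (E i).PosDef)
    (Pbar : ∀ i : ι, Matrix (Fin (ni i) ⊕ Fin (q i)) (Fin (ni i) ⊕ Fin (q i)) ℝ)
    (hPbar : ∀ i : ι, (Pbar i).IsSymm)
    (γ : ι → ℝ) (hγ : ∀ i : ι, 0 < γ i)
    (F S : ∀ i : ι, Matrix (Fin (nN i)) (Fin (nN i)) ℝ)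
    (hFsymm : ∀ i : ι, (F i).IsSymm) (hSsymm : ∀ i : ι, (S i).IsSymm)
    (Y : ∀ i : ι, Matrix (Fin (m i)) (Fin (nN i)) ℝ)
    (A' : ∀ i : ι, Matrix (Fin (ni i)) (Fin (nN i)) ℝ)
    (B' : ∀ i : ι, Matrix (Fin (ni i)) (Fin (m i)) ℝ)
    (Bd : ∀ i : ι, Matrix (Fin (ni i)) (Fin (nd i)) ℝ)
    (Cz : ∀ i : ι, Matrix (Fin (q i)) (Fin (nN i)) ℝ)
    (Dz : ∀ i : ι, Matrix (Fin (q i)) (Fin (m i)) ℝ)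
    (Cy : ∀ i : ι, Matrix (Fin (p i)) (Fin (nN i)) ℝ)
    (Dy : ∀ i : ι, Matrix (Fin (p i)) (Fin (m i)) ℝ)
    (Eglob : Matrix (Fin n) (Fin n) ℝ)
    (hEglob : Eglob = ∑ j : ι, (T j)ᵀ * E j * T j)
    (EN : ∀ i : ι, Matrix (Fin (nN i)) (Fin (nN i)) ℝ)
    (hEN : ∀ i : ι, EN i = W i * Eglob * (W i)ᵀ)
    (Ebar : ∀ i : ι, Matrix (Fin (nN i)) (Fin (nN i)) ℝ)
    (hEbar : ∀ i : ι, Ebar i = W i * (T i)ᵀ * E i * (T i * (W i)ᵀ))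
    (J : ∀ i : ι, Matrix (Fin (ni i) ⊕ Fin (q i)) (Fin (nN i)) ℝ)
    (hJ : ∀ i : ι, J i = fromRows (A' i * EN i + B' i * Y i) (Cz i * EN i + Dz i * Y i))
    (H : ∀ i : ι, Matrix (Fin (p i)) (Fin (nN i)) ℝ)
    (hH : ∀ i : ι, H i = Cy i * EN i + Dy i * Y i)
    (hTrΦ : ∀ i : ι, (Φ i).trace < γ i ^ 2)
    (hLMIb : ∀ i : ι, (fromBlocks (Φ i) ((Bd i)ᵀ) (Bd i) (E i)).PosDef)
    (hLMIc : ∀ i : ι,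
      (-(fromBlocks
          (fromBlocks (Pbar i + fromBlocks (-(E i)) 0 0 0) (J i) ((J i)ᵀ) (-(Ebar i) - F i))
          (fromRows 0 ((H i)ᵀ))
          (Matrix.fromCols 0 (H i))
          (-1))).PosDef)
    (hFS : ∀ i : ι, (S i - F i).PosSemidef)
    (Sblk : ∀ i j : ι, Matrix (Fin (ni j)) (Fin (ni j)) ℝ)
    (hSblkSymm : ∀ i j : ι, (Sblk i j).IsSymm)
    (hSdiag : ∀ i : ι, S i = ∑ j ∈ N i, W i * (T j)ᵀ * Sblk i j * (T j * (W i)ᵀ))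
    (hScoup : ∀ i : ι, (-(∑ j ∈ N i, T i * (W j)ᵀ * S j * (W j * (T i)ᵀ))).PosSemidef)
    (K : ∀ i : ι, Matrix (Fin (m i)) (Fin (nN i)) ℝ)
    (hK : ∀ i : ι, K i = Y i * (EN i)⁻¹)
    (Θ : ∀ i : ι, Matrix (Fin (nN i)) (Fin (nN i)) ℝ)
    (hΘ : ∀ i : ι, Θ i = (EN i)⁻¹ * F i * (EN i)⁻¹)
    (Δ : ∀ i : ι, Matrix (Fin (ni i)) (Fin (q i)) ℝ)
    (hΔ : ∀ i : ι,
      ((Matrix.fromCols (1 : Matrix (Fin (ni i)) (Fin (ni i)) ℝ) (Δ i)) * Pbar i * (Matrix.fromCols (1 : Matrix (Fin (ni i)) (Fin (ni i)) ℝ) (Δ i))ᵀ).PosSemidef)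
    :
    (∀ i : ι,
      (Θ i - ((A' i + B' i * K i + Δ i * (Cz i + Dz i * K i))ᵀ * (E i)⁻¹ *
            (A' i + B' i * K i + Δ i * (Cz i + Dz i * K i))
          - W i * (T i)ᵀ * (E i)⁻¹ * (T i * (W i)ᵀ)
          + (Cy i + Dy i * K i)ᵀ * (Cy i + Dy i * K i))).PosDef ∧
      ((Bd i)ᵀ * (E i)⁻¹ * Bd i).trace < γ i ^ 2) ∧
    (-(∑ i : ι, (W i)ᵀ * Θ i * W i)).PosSemidef := by
  -- basic facts about E
  have hdetE : ∀ j, IsUnit (E j).det := fun j => pdIsUnitDet (hE j)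
  have hETs : ∀ j, (E j)ᵀ = E j := fun j => treq (hE j).1
  have hEinvT : ∀ j, ((E j)⁻¹)ᵀ = (E j)⁻¹ := fun j => pdInvT (hE j)
  have hEEinv : ∀ j, E j * (E j)⁻¹ = 1 := fun j => Matrix.mul_nonsing_inv _ (hdetE j)
  have hEinvE : ∀ j, (E j)⁻¹ * E j = 1 := fun j => Matrix.nonsing_inv_mul _ (hdetE j)
  have hEinvEp : ∀ j, ∀ {κ : Type} (X : Matrix (Fin (ni j)) κ ℝ),
      (E j)⁻¹ * (E j * X) = X := by
    intro j κ X
    rw [← Matrix.mul_assoc, hEinvE j, Matrix.one_mul]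
  have hEEinvp : ∀ j, ∀ {κ : Type} (X : Matrix (Fin (ni j)) κ ℝ),
      E j * ((E j)⁻¹ * X) = X := by
    intro j κ X
    rw [← Matrix.mul_assoc, hEEinv j, Matrix.one_mul]
  -- Eglob is positive definite
  have hEglobPD : Eglob.PosDef := by
    refine Matrix.PosDef.of_dotProduct_mulVec_pos ?_ ?_
    · rw [Matrix.IsHermitian, conjTranspose_eq_transpose_of_trivial, hEglob,
        Matrix.transpose_sum]
      refine Finset.sum_congr rfl fun j _ => ?_
      rw [Matrix.transpose_mul, Matrix.transpose_mul, Matrix.transpose_transpose, hETs j,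
        Matrix.mul_assoc]
    · intro x hx
      rw [star_trivial, hEglob, _root_.sum_mulVec, dp_sum]
      have hex : ∃ j, T j *ᵥ x ≠ 0 := by
        by_contra hc
        push_neg at hc
        apply hx
        have h1 : x = (∑ j, (T j)ᵀ * T j) *ᵥ x := by rw [hTsum, Matrix.one_mulVec]
        rw [_root_.sum_mulVec] at h1
        simpa [← Matrix.mulVec_mulVec, hc] using h1
      obtain ⟨j0, hj0⟩ := hex
      refine Finset.sum_pos' (fun j _ => ?_) ⟨j0, Finset.mem_univ j0, ?_⟩
      · rw [quad_conj]
        have := (hE j).posSemidef.dotProduct_mulVec_nonneg (T j *ᵥ x)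
        simpa using this
      · rw [quad_conj]
        have := (hE j0).dotProduct_mulVec_pos hj0
        simpa using this
  -- EN is positive definite
  have hENPD : ∀ i, (EN i).PosDef := by
    intro i
    rw [hEN i]
    exact pd_conj hEglobPD (W i) (W i) (hWW i)
  have hdetEN : ∀ i, IsUnit (EN i).det := fun i => pdIsUnitDet (hENPD i)
  have hENT : ∀ i, (EN i)ᵀ = EN i := fun i => treq (hENPD i).1
  have hENinvT : ∀ i, ((EN i)⁻¹)ᵀ = (EN i)⁻¹ := fun i => pdInvT (hENPD i)
  have hENr : ∀ i, EN i * (EN i)⁻¹ = 1 := fun i => Matrix.mul_nonsing_inv _ (hdetEN i)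
  have hENl : ∀ i, (EN i)⁻¹ * EN i = 1 := fun i => Matrix.nonsing_inv_mul _ (hdetEN i)
  have hENlp : ∀ i, ∀ {κ : Type} (X : Matrix (Fin (nN i)) κ ℝ),
      (EN i)⁻¹ * (EN i * X) = X := by
    intro i κ X
    rw [← Matrix.mul_assoc, hENl i, Matrix.one_mul]
  -- selection identities
  have hTW1 : ∀ i j, j ∈ N i → T j * ((W i)ᵀ * W i) = T j := by
    intro i j hj
    rw [hWTW i, Matrix.mul_sum]
    rw [Finset.sum_eq_single_of_mem j hj]
    · rw [← Matrix.mul_assoc, hTT j, Matrix.one_mul]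
    · intro l _ hne
      rw [← Matrix.mul_assoc, hTTzero j l hne.symm, Matrix.zero_mul]
  have hTWp : ∀ i j, j ∈ N i → ∀ {κ : Type} (X : Matrix (Fin n) κ ℝ),
      T j * ((W i)ᵀ * (W i * X)) = T j * X := by
    intro i j hj κ X
    have := congrArg (fun Z => Z * X) (hTW1 i j hj)
    simpa only [Matrix.mul_assoc] using this
  have hWT1 : ∀ i j, j ∈ N i → (W i)ᵀ * (W i * (T j)ᵀ) = (T j)ᵀ := by
    intro i j hj
    have := congrArg Matrix.transpose (hTW1 i j hj)
    simpa only [Matrix.transpose_mul, Matrix.transpose_transpose, Matrix.mul_assoc] using this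
  have hWTp : ∀ i j, j ∈ N i → ∀ {κ : Type} (X : Matrix (Fin (ni j)) κ ℝ),
      (W i)ᵀ * (W i * ((T j)ᵀ * X)) = (T j)ᵀ * X := by
    intro i j hj κ X
    have := congrArg (fun Z => Z * X) (hWT1 i j hj)
    simpa only [Matrix.mul_assoc] using this
  -- Eglob commutation
  have hEg1 : ∀ j, Eglob * (T j)ᵀ = (T j)ᵀ * E j := by
    intro j
    rw [hEglob, Matrix.sum_mul]
    rw [Finset.sum_eq_single_of_mem j (Finset.mem_univ j)]
    · rw [Matrix.mul_assoc, hTT j, Matrix.mul_one]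
    · intro l _ hne
      rw [Matrix.mul_assoc, hTTzero l j hne, Matrix.mul_zero]
  -- EN commutation with W Tᵀ
  have hENWT1 : ∀ i j, j ∈ N i → EN i * (W i * (T j)ᵀ) = W i * ((T j)ᵀ * E j) := by
    intro i j hj
    rw [hEN i]
    calc W i * Eglob * (W i)ᵀ * (W i * (T j)ᵀ)
        = W i * (Eglob * ((W i)ᵀ * (W i * (T j)ᵀ))) := by simp only [Matrix.mul_assoc]
      _ = W i * (Eglob * (T j)ᵀ) := by rw [hWT1 i j hj]
      _ = W i * ((T j)ᵀ * E j) := by rw [hEg1 j]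
  have hENiWT1 : ∀ i j, j ∈ N i → (EN i)⁻¹ * (W i * (T j)ᵀ) = W i * ((T j)ᵀ * (E j)⁻¹) := by
    intro i j hj
    have h1 : W i * (T j)ᵀ = EN i * (W i * ((T j)ᵀ * (E j)⁻¹)) := by
      calc W i * (T j)ᵀ = W i * ((T j)ᵀ * (E j * (E j)⁻¹)) := by
            rw [hEEinv j, Matrix.mul_one]
        _ = EN i * (W i * (T j)ᵀ) * (E j)⁻¹ := by
            rw [hENWT1 i j hj]; simp only [Matrix.mul_assoc]
        _ = EN i * (W i * ((T j)ᵀ * (E j)⁻¹)) := by simp only [Matrix.mul_assoc]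
    rw [h1, hENlp i]
  have hENiWTp : ∀ i j, j ∈ N i → ∀ {κ : Type} (X : Matrix (Fin (ni j)) κ ℝ),
      (EN i)⁻¹ * (W i * ((T j)ᵀ * X)) = W i * ((T j)ᵀ * ((E j)⁻¹ * X)) := by
    intro i j hj κ X
    have := congrArg (fun Z => Z * X) (hENiWT1 i j hj)
    simpa only [Matrix.mul_assoc] using this
  have hTWENi1 : ∀ i j, j ∈ N i → T j * ((W i)ᵀ * (EN i)⁻¹) = (E j)⁻¹ * (T j * (W i)ᵀ) := by
    intro i j hj
    have := congrArg Matrix.transpose (hENiWT1 i j hj)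
    simpa only [Matrix.transpose_mul, Matrix.transpose_transpose, hENinvT i, hEinvT j,
      Matrix.mul_assoc] using this
  have hTWENip : ∀ i j, j ∈ N i → ∀ {κ : Type} (X : Matrix (Fin (nN i)) κ ℝ),
      T j * ((W i)ᵀ * ((EN i)⁻¹ * X)) = (E j)⁻¹ * (T j * ((W i)ᵀ * X)) := by
    intro i j hj κ X
    have := congrArg (fun Z => Z * X) (hTWENi1 i j hj)
    simpa only [Matrix.mul_assoc] using this
  -- Part (ii)
  have main2 : ∀ i, ((Bd i)ᵀ * (E i)⁻¹ * Bd i).trace < γ i ^ 2 := by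
    intro i
    have h0' : (fromBlocks (Φ i) ((Bd i)ᵀ) (((Bd i)ᵀ)ᵀ) (E i)).PosDef := by
      rw [Matrix.transpose_transpose]; exact hLMIb i
    have h1 := schur_br (hE i) h0'
    rw [Matrix.transpose_transpose] at h1
    have h2 : (0:ℝ) ≤ (Φ i - (Bd i)ᵀ * (E i)⁻¹ * Bd i).trace := psd_trace h1.posSemidef
    rw [Matrix.trace_sub] at h2
    linarith [hTrΦ i]
  -- Part (iii)
  have hWS : ∀ i, (W i)ᵀ * (EN i)⁻¹ * S i * ((EN i)⁻¹ * W i)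
      = ∑ j ∈ N i, (T j)ᵀ * (E j)⁻¹ * Sblk i j * ((E j)⁻¹ * T j) := by
    intro i
    rw [hSdiag i]
    simp only [Matrix.mul_sum, Matrix.sum_mul]
    refine Finset.sum_congr rfl fun j hj => ?_
    simp only [Matrix.mul_assoc]
    rw [hENiWTp i j hj, hWTp i j hj, hTWENip i j hj, hTW1 i j hj]
  have hTS : ∀ j k, k ∈ N j → T j * (W k)ᵀ * S k * (W k * (T j)ᵀ) = Sblk k j := by
    intro j k hkj
    have hjk : j ∈ N k := (hNsym j k).mp hkj
    rw [hSdiag k]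
    simp only [Matrix.mul_sum, Matrix.sum_mul]
    rw [Finset.sum_eq_single_of_mem j hjk]
    · simp only [Matrix.mul_assoc]
      rw [hTWp k j hjk, hWT1 k j hjk, hTT j, Matrix.mul_one, ← Matrix.mul_assoc,
        hTT j, Matrix.one_mul]
    · intro l _ hne
      simp only [Matrix.mul_assoc]
      rw [hTWp k j hjk, hWT1 k j hjk, hTTzero l j hne]
      simp
  have hswap : (∑ i : ι, ∑ j ∈ N i, (T j)ᵀ * (E j)⁻¹ * Sblk i j * ((E j)⁻¹ * T j))
      = ∑ j : ι, ∑ i ∈ N j, (T j)ᵀ * (E j)⁻¹ * Sblk i j * ((E j)⁻¹ * T j) :=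
    Finset.sum_comm' (by intro x y; simp [hNsym x y])
  have hWTh : ∀ i, (W i)ᵀ * (EN i)⁻¹ * F i * ((EN i)⁻¹ * W i) = (W i)ᵀ * Θ i * W i := by
    intro i; rw [hΘ i]; simp only [Matrix.mul_assoc]
  have hAT : ∀ i, ((W i)ᵀ * (EN i)⁻¹)ᵀ = (EN i)⁻¹ * W i := by
    intro i; rw [Matrix.transpose_mul, Matrix.transpose_transpose, hENinvT i]
  have hBT : ∀ j, ((T j)ᵀ * (E j)⁻¹)ᵀ = (E j)⁻¹ * T j := by
    intro j; rw [Matrix.transpose_mul, Matrix.transpose_transpose, hEinvT j]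
  have main3 : (-(∑ i : ι, (W i)ᵀ * Θ i * W i)).PosSemidef := by
    have e1 : ∀ i, ((W i)ᵀ * (EN i)⁻¹) * (S i - F i) * ((W i)ᵀ * (EN i)⁻¹)ᵀ
        = (∑ j ∈ N i, (T j)ᵀ * (E j)⁻¹ * Sblk i j * ((E j)⁻¹ * T j))
          - (W i)ᵀ * Θ i * W i := by
      intro i
      rw [hAT i, Matrix.mul_sub, Matrix.sub_mul, hWS i, hWTh i]
    have e2 : ∀ j, ((T j)ᵀ * (E j)⁻¹)
          * (-(∑ k ∈ N j, T j * (W k)ᵀ * S k * (W k * (T j)ᵀ)))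
          * ((T j)ᵀ * (E j)⁻¹)ᵀ
        = -(∑ k ∈ N j, (T j)ᵀ * (E j)⁻¹ * Sblk k j * ((E j)⁻¹ * T j)) := by
      intro j
      rw [hBT j,
        show (∑ k ∈ N j, T j * (W k)ᵀ * S k * (W k * (T j)ᵀ)) = ∑ k ∈ N j, Sblk k j from
          Finset.sum_congr rfl fun k hk => hTS j k hk,
        Matrix.mul_neg, Matrix.neg_mul, Matrix.mul_sum, Matrix.sum_mul]
    have key : -(∑ i : ι, (W i)ᵀ * Θ i * W i)
        = (∑ i : ι, ((W i)ᵀ * (EN i)⁻¹) * (S i - F i) * ((W i)ᵀ * (EN i)⁻¹)ᵀ)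
          + ∑ j : ι, ((T j)ᵀ * (E j)⁻¹)
              * (-(∑ k ∈ N j, T j * (W k)ᵀ * S k * (W k * (T j)ᵀ)))
              * ((T j)ᵀ * (E j)⁻¹)ᵀ := by
      rw [Finset.sum_congr rfl fun i _ => e1 i, Finset.sum_congr rfl fun j _ => e2 j,
        Finset.sum_sub_distrib, Finset.sum_neg_distrib, hswap]
      abel
    rw [key]
    exact (psd_sum _ fun i _ => psd_conj (hFS i) _).add
      (psd_sum _ fun j _ => psd_conj (hScoup j) _)
  -- Part (i)
  have main1 : ∀ i : ι,
      (Θ i - ((A' i + B' i * K i + Δ i * (Cz i + Dz i * K i))ᵀ * (E i)⁻¹ *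
            (A' i + B' i * K i + Δ i * (Cz i + Dz i * K i))
          - W i * (T i)ᵀ * (E i)⁻¹ * (T i * (W i)ᵀ)
          + (Cy i + Dy i * K i)ᵀ * (Cy i + Dy i * K i))).PosDef := by
    intro i
    have hNi := hNself i
    have hYK : Y i = K i * EN i := by rw [hK i, Matrix.mul_assoc, hENl i, Matrix.mul_one]
    set Ah := A' i + B' i * K i + Δ i * (Cz i + Dz i * K i) with hAh
    set Ch := Cy i + Dy i * K i with hCh
    set C := fromCols (1 : Matrix (Fin (ni i)) (Fin (ni i)) ℝ) (Δ i) with hC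
    have hCT : Cᵀ = fromRows 1 (Δ i)ᵀ := by
      rw [hC, transpose_fromCols, Matrix.transpose_one]
    have hJ2 : C * J i = Ah * EN i := by
      rw [hC, hJ i, fromCols_mul_fromRows, hYK, hAh]
      simp only [Matrix.add_mul, Matrix.mul_add, Matrix.mul_assoc, Matrix.one_mul]
    have hHC : H i = Ch * EN i := by
      rw [hH i, hYK, hCh]
      simp only [Matrix.add_mul, Matrix.mul_assoc]
    -- Step 1: shape the big LMI
    have h0' : (fromBlocks
        (-(fromBlocks (Pbar i + fromBlocks (-(E i)) 0 0 0) (J i) ((J i)ᵀ) (-(Ebar i) - F i)))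
        (fromRows 0 (-(H i)ᵀ))
        ((fromRows 0 (-(H i)ᵀ))ᵀ)
        (1 : Matrix (Fin (p i)) (Fin (p i)) ℝ)).PosDef := by
      have h := hLMIc i
      have e : (-(fromBlocks
            (fromBlocks (Pbar i + fromBlocks (-(E i)) 0 0 0) (J i) ((J i)ᵀ) (-(Ebar i) - F i))
            (fromRows 0 ((H i)ᵀ)) (fromCols 0 (H i)) (-1)))
          = fromBlocks
            (-(fromBlocks (Pbar i + fromBlocks (-(E i)) 0 0 0) (J i) ((J i)ᵀ)
               (-(Ebar i) - F i)))
            (fromRows 0 (-(H i)ᵀ)) ((fromRows 0 (-(H i)ᵀ))ᵀ) 1 := by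
        rw [fromBlocks_neg, fromRows_neg, fromCols_neg, transpose_fromRows,
          Matrix.transpose_neg, Matrix.transpose_zero, Matrix.transpose_transpose, neg_neg]
        simp only [neg_zero]
      rwa [e] at h
    -- Step 2: Schur complement w.r.t. the identity block
    have h1 := schur_br Matrix.PosDef.one h0'
    have e1 : -(fromBlocks (Pbar i + fromBlocks (-(E i)) 0 0 0) (J i) ((J i)ᵀ)
            (-(Ebar i) - F i))
          - fromRows 0 (-(H i)ᵀ) * (1 : Matrix (Fin (p i)) (Fin (p i)) ℝ)⁻¹ *
            (fromRows 0 (-(H i)ᵀ))ᵀ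
        = fromBlocks (-(Pbar i + fromBlocks (-(E i)) 0 0 0)) (-(J i)) ((-(J i))ᵀ)
            (Ebar i + F i - (H i)ᵀ * H i) := by
      rw [show (1 : Matrix (Fin (p i)) (Fin (p i)) ℝ)⁻¹ = 1 from
          Matrix.inv_eq_left_inv (by simp), Matrix.mul_one, transpose_fromRows, Matrix.transpose_neg,
        Matrix.transpose_zero, Matrix.transpose_transpose, fromRows_mul_fromCols,
        fromBlocks_neg, sub_eq_add_neg, fromBlocks_neg, fromBlocks_add]
      congr 1 <;>
        simp [Matrix.neg_mul, Matrix.mul_neg, Matrix.transpose_neg] <;> abel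
    rw [e1] at h1
    -- Step 3: congruence by blkdiag(C, 1)
    set G2 := fromBlocks C 0 0 (1 : Matrix (Fin (nN i)) (Fin (nN i)) ℝ) with hG2
    have hG2T : G2ᵀ = fromBlocks Cᵀ 0 0 1 := by
      rw [hG2, fromBlocks_transpose, Matrix.transpose_zero, Matrix.transpose_zero,
        Matrix.transpose_one]
    have hL2 : fromBlocks
        (fromCols (1 : Matrix (Fin (ni i)) (Fin (ni i)) ℝ)
          (0 : Matrix (Fin (ni i)) (Fin (q i)) ℝ)) 0 0
        (1 : Matrix (Fin (nN i)) (Fin (nN i)) ℝ) * G2ᵀ = 1 := by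
      rw [hG2T, hCT, fromBlocks_multiply, fromCols_mul_fromRows]
      simp [fromBlocks_one]
    have h2 := pd_conj h1 G2 _ hL2
    have e2 : G2 * fromBlocks (-(Pbar i + fromBlocks (-(E i)) 0 0 0)) (-(J i)) ((-(J i))ᵀ)
          (Ebar i + F i - (H i)ᵀ * H i) * G2ᵀ
        = fromBlocks (C * (-(Pbar i + fromBlocks (-(E i)) 0 0 0)) * Cᵀ) (-(C * J i))
            ((-(C * J i))ᵀ) (Ebar i + F i - (H i)ᵀ * H i) := by
      rw [hG2T, hG2, fromBlocks_multiply, fromBlocks_multiply]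
      simp [Matrix.mul_neg, Matrix.neg_mul, Matrix.transpose_neg, Matrix.transpose_mul,
        Matrix.mul_assoc]
    rw [e2] at h2
    -- Step 4: add the PSD uncertainty corner
    have hPsd : (fromBlocks (C * Pbar i * Cᵀ) 0 0
        (0 : Matrix (Fin (nN i)) (Fin (nN i)) ℝ)).PosSemidef := by
      apply psd_corner
      have h := hΔ i
      rwa [← hC] at h
    have h3 := h2.add_posSemidef hPsd
    have hCX : C * ((fromBlocks (-(E i)) 0 0 0 : Matrix (Fin (ni i) ⊕ Fin (q i)) (Fin (ni i) ⊕ Fin (q i)) ℝ) * Cᵀ) = -(E i) := by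
      rw [hCT, hC, ← Matrix.mul_assoc, fromCols_mul_fromBlocks, fromCols_mul_fromRows]
      simp
    have e3 : fromBlocks (C * (-(Pbar i + fromBlocks (-(E i)) 0 0 0)) * Cᵀ) (-(C * J i))
          ((-(C * J i))ᵀ) (Ebar i + F i - (H i)ᵀ * H i)
        + fromBlocks (C * Pbar i * Cᵀ) 0 0 0
        = fromBlocks (E i) (-(Ah * EN i)) ((-(Ah * EN i))ᵀ)
            (Ebar i + F i - (H i)ᵀ * H i) := by
      rw [hJ2, fromBlocks_add]
      have h11 : C * (-(Pbar i + fromBlocks (-(E i)) 0 0 0)) * Cᵀ + C * Pbar i * Cᵀ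
          = E i := by
        simp only [neg_add, Matrix.mul_add, Matrix.add_mul, Matrix.mul_neg, Matrix.neg_mul,
          Matrix.mul_assoc, hCX, neg_neg]
        abel
      rw [h11, add_zero, add_zero, add_zero]
    rw [e3] at h3
    -- Step 5: Schur complement w.r.t. E i
    have h4 := schur_tl (hE i) h3
    -- Step 6: congruence by (EN i)⁻¹
    have hLEN : EN i * ((EN i)⁻¹)ᵀ = 1 := by rw [hENinvT i]; exact hENr i
    have h5 := pd_conj h4 (EN i)⁻¹ (EN i) hLEN
    have e6 : (EN i)⁻¹ * (Ebar i + F i - (H i)ᵀ * H i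
          - (-(Ah * EN i))ᵀ * (E i)⁻¹ * (-(Ah * EN i))) * ((EN i)⁻¹)ᵀ
        = Θ i - (Ahᵀ * (E i)⁻¹ * Ah - W i * (T i)ᵀ * (E i)⁻¹ * (T i * (W i)ᵀ)
            + Chᵀ * Ch) := by
      rw [hENinvT i, hΘ i, hEbar i, hHC]
      simp only [Matrix.transpose_neg, Matrix.transpose_mul, Matrix.neg_mul, Matrix.mul_neg,
        neg_neg, hENT i, Matrix.mul_sub, Matrix.sub_mul, Matrix.mul_add, Matrix.add_mul,
        Matrix.mul_assoc]
      simp only [hENiWTp i i hNi, hTWENi1 i i hNi, hEinvEp i, hEEinvp i, hENlp i, hENr i,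
        Matrix.mul_one]
      abel
    rw [e6] at h5
    exact h5
  exact ⟨fun i => ⟨main1 i, main2 i⟩, main3⟩
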